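/- Every limit point of the family {w_p}_{p≥1} of solutions of the penalized problem solves the limiting problem: if w_{p_k} → w̃ along a subsequence with p_k → ∞, then w̃ ∈ S and w̃ minimizes ‖w - w̄‖ over S, i.e. w̃ = w∞. -/

import Mathlib

theorem stmt_9 (n m : ℕ)
    (M : EuclideanSpace ℝ (Fin n) →L[ℝ] EuclideanSpace ℝ (Fin m))
    (c : EuclideanSpace ℝ (Fin m)) (wbar winf : EuclideanSpace ℝ (Fin n)) (γ : ℝ)
    (hγ : ∀ w : EuclideanSpace ℝ (Fin n), (∀ i, 0 ≤ w i) → γ ≤ ‖c - M (w - wbar)‖ ^ 2)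
    (hwinf_nonneg : ∀ i, 0 ≤ winf i)
    (hwinf_opt : ‖c - M (winf - wbar)‖ ^ 2 = γ)
    (hwinf_proj : ∀ w : EuclideanSpace ℝ (Fin n), (∀ i, 0 ≤ w i) →
        ‖c - M (w - wbar)‖ ^ 2 = γ → ‖winf - wbar‖ ≤ ‖w - wbar‖)
    (wp : ℝ → EuclideanSpace ℝ (Fin n)) (yp : ℝ → EuclideanSpace ℝ (Fin m))
    (hfeas : ∀ p, M (wp p - wbar) + yp p = c ∧ ∀ i, 0 ≤ wp p i)
    (hmin : ∀ p, 1 ≤ p → ∀ (w : EuclideanSpace ℝ (Fin n)) (y : EuclideanSpace ℝ (Fin m)),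
        M (w - wbar) + y = c → (∀ i, 0 ≤ w i) →
        ‖wp p - wbar‖ ^ 2 / 2 + p / 2 * ‖yp p‖ ^ 2 ≤ ‖w - wbar‖ ^ 2 / 2 + p / 2 * ‖y‖ ^ 2)
    -- a convergent subsequence with p_k → ∞
    (pk : ℕ → ℝ) (hpk1 : ∀ k, 1 ≤ pk k)
    (hpk : Filter.Tendsto pk Filter.atTop Filter.atTop)
    (wt : EuclideanSpace ℝ (Fin n))
    (hconv : Filter.Tendsto (fun k => wp (pk k)) Filter.atTop (nhds wt)) :
    ((∀ i, 0 ≤ wt i) ∧ ‖c - M (wt - wbar)‖ ^ 2 = γ) ∧ wt = winf := by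
  -- yp p in terms of wp p
  have hyp_eq : ∀ p, yp p = c - M (wp p - wbar) := fun p =>
    eq_sub_of_add_eq' (hfeas p).1
  -- nonnegativity of wt
  have hwt_nonneg : ∀ i, 0 ≤ wt i := by
    intro i
    have h1 : Filter.Tendsto (fun k => wp (pk k) i) Filter.atTop (nhds (wt i)) :=
      ((EuclideanSpace.proj i).continuous.tendsto wt).comp hconv
    exact ge_of_tendsto' h1 (fun k => (hfeas (pk k)).2 i)
  set C : ℝ := ‖winf - wbar‖ ^ 2 with hC
  -- key inequality from optimality against winf
  have key : ∀ p, 1 ≤ p →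
      ‖wp p - wbar‖ ^ 2 / 2 + p / 2 * ‖yp p‖ ^ 2 ≤ C / 2 + p / 2 * γ := by
    intro p hp
    have h := hmin p hp winf (c - M (winf - wbar)) (by abel) hwinf_nonneg
    rwa [hwinf_opt] at h
  -- lower bound on ‖yp p‖²
  have hlow : ∀ p, γ ≤ ‖yp p‖ ^ 2 := by
    intro p
    rw [hyp_eq]
    exact hγ _ (hfeas p).2
  -- positivity of pk
  have hpk0 : ∀ k, (0:ℝ) < pk k := fun k => lt_of_lt_of_le one_pos (hpk1 k)
  -- upper bound on ‖yp (pk k)‖²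
  have hupbd : ∀ k, ‖yp (pk k)‖ ^ 2 ≤ γ + C / pk k := by
    intro k
    have h := key (pk k) (hpk1 k)
    have hp := hpk0 k
    have hcancel : C / pk k * pk k = C := div_mul_cancel₀ C (ne_of_gt hp)
    nlinarith [sq_nonneg ‖wp (pk k) - wbar‖]
  -- the limit of ‖yp (pk k)‖²
  have hcontf : Continuous (fun w : EuclideanSpace ℝ (Fin n) => ‖c - M (w - wbar)‖ ^ 2) :=
    ((continuous_const.sub (M.continuous.comp (continuous_id.sub continuous_const))).norm).pow 2
  have hylim : Filter.Tendsto (fun k => ‖yp (pk k)‖ ^ 2) Filter.atTop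
      (nhds (‖c - M (wt - wbar)‖ ^ 2)) := by
    have := (hcontf.tendsto wt).comp hconv
    simpa [Function.comp, Function.comp_def, hyp_eq] using this
  have hulim : Filter.Tendsto (fun k => γ + C / pk k) Filter.atTop (nhds γ) := by
    have : Filter.Tendsto (fun k => C / pk k) Filter.atTop (nhds 0) :=
      Filter.Tendsto.div_atTop tendsto_const_nhds hpk
    simpa using tendsto_const_nhds.add this
  have hle : ‖c - M (wt - wbar)‖ ^ 2 ≤ γ :=
    le_of_tendsto_of_tendsto' hylim hulim hupbd
  have hopt : ‖c - M (wt - wbar)‖ ^ 2 = γ := le_antisymm hle (hγ wt hwt_nonneg)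
  -- norm bound on wp
  have hnormbd : ∀ k, ‖wp (pk k) - wbar‖ ≤ ‖winf - wbar‖ := by
    intro k
    have h := key (pk k) (hpk1 k)
    have hp := hpk0 k
    have hl := hlow (pk k)
    have hsq : ‖wp (pk k) - wbar‖ ^ 2 ≤ ‖winf - wbar‖ ^ 2 := by nlinarith
    nlinarith [norm_nonneg (wp (pk k) - wbar), norm_nonneg (winf - wbar)]
  have hnlim : Filter.Tendsto (fun k => ‖wp (pk k) - wbar‖) Filter.atTop
      (nhds ‖wt - wbar‖) :=
    ((continuous_id.sub continuous_const).norm.tendsto wt).comp hconv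
  have hle2 : ‖wt - wbar‖ ≤ ‖winf - wbar‖ := le_of_tendsto' hnlim hnormbd
  have hge2 : ‖winf - wbar‖ ≤ ‖wt - wbar‖ := hwinf_proj wt hwt_nonneg hopt
  have hnormeq : ‖wt - wbar‖ = ‖winf - wbar‖ := le_antisymm hle2 hge2
  refine ⟨⟨hwt_nonneg, hopt⟩, ?_⟩
  -- midpoint argument
  set mid : EuclideanSpace ℝ (Fin n) := (1/2 : ℝ) • (wt + winf) with hmid
  have hmid_nonneg : ∀ i, 0 ≤ mid i := by
    intro i
    have : mid i = (1/2 : ℝ) * (wt i + winf i) := rfl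
    rw [this]
    have := hwt_nonneg i
    have := hwinf_nonneg i
    positivity
  set a : EuclideanSpace ℝ (Fin m) := c - M (wt - wbar) with ha
  set b : EuclideanSpace ℝ (Fin m) := c - M (winf - wbar) with hb
  have hmidvec : c - M (mid - wbar) = (1/2 : ℝ) • (a + b) := by
    have h1 : mid - wbar = (1/2 : ℝ) • ((wt - wbar) + (winf - wbar)) := by
      rw [hmid]; module
    rw [h1, map_smul, map_add, ha, hb]
    module
  have hγ0 : 0 ≤ γ := hwinf_opt ▸ sq_nonneg _
  have hna : ‖a‖ = Real.sqrt γ := by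
    rw [← hopt]; exact (Real.sqrt_sq (norm_nonneg a)).symm
  have hnb : ‖b‖ = Real.sqrt γ := by
    rw [← hwinf_opt]; exact (Real.sqrt_sq (norm_nonneg b)).symm
  have hmid_le : ‖c - M (mid - wbar)‖ ≤ Real.sqrt γ := by
    rw [hmidvec, norm_smul]
    calc ‖(1/2 : ℝ)‖ * ‖a + b‖ ≤ (1/2) * (‖a‖ + ‖b‖) := by
          have h2 : ‖(1/2 : ℝ)‖ = 1/2 := by rw [Real.norm_eq_abs]; norm_num
          rw [h2]
          have := norm_add_le a b
          linarith
      _ = Real.sqrt γ := by rw [hna, hnb]; ring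
  have hmid_opt : ‖c - M (mid - wbar)‖ ^ 2 = γ := by
    refine le_antisymm ?_ (hγ mid hmid_nonneg)
    calc ‖c - M (mid - wbar)‖ ^ 2 ≤ (Real.sqrt γ) ^ 2 := by
          have h0 := norm_nonneg (c - M (mid - wbar))
          nlinarith
      _ = γ := Real.sq_sqrt hγ0
  have hproj := hwinf_proj mid hmid_nonneg hmid_opt
  -- parallelogram law
  have hpar := parallelogram_law_with_norm ℝ (wt - wbar) (winf - wbar)
  have hmiddist : ‖mid - wbar‖ = (1/2) * ‖(wt - wbar) + (winf - wbar)‖ := by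
    have h1 : mid - wbar = (1/2 : ℝ) • ((wt - wbar) + (winf - wbar)) := by
      rw [hmid]; module
    rw [h1, norm_smul, Real.norm_eq_abs]
    norm_num
  have hdiff : (wt - wbar) - (winf - wbar) = wt - winf := by abel
  rw [hdiff] at hpar
  rw [hnormeq] at hpar
  have harith : ∀ s d r : ℝ, 0 ≤ d → 0 ≤ r → r ≤ 1/2 * s →
      s * s + d * d = 2 * (r * r + r * r) → d = 0 := by
    intro s d r hd hr hrs h
    have h2r : (0:ℝ) ≤ 2 * r := by linarith
    have h2rs : 2 * r ≤ s := by linarith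
    have hsq : (2*r) * (2*r) ≤ s * s := mul_self_le_mul_self h2r h2rs
    have hdd : d * d ≤ 0 := by linarith
    have hdd0 : d * d = 0 := le_antisymm hdd (mul_self_nonneg d)
    exact mul_self_eq_zero.mp hdd0
  have hzero : ‖wt - winf‖ = 0 := by
    rw [hmiddist] at hproj
    exact harith _ _ _ (norm_nonneg _) (norm_nonneg _) hproj (by simpa only [sq] using hpar)
  have := norm_eq_zero.mp hzero
  exact sub_eq_zero.mp this
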